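/- For every discrete fair division instance with n agents, a finite set M of goods, and monotone normalized valuation functions v_i : 2^M → ℝ≥0 (v_i(∅) = 0 and v_i(S) ≤ v_i(T) whenever S ⊆ T), there exists an allocation that is envy-free up to one good (EF1): for every pair of agents i, j with A_j nonempty, there is a good g ∈ A_j such that v_i(A_i) ≥ v_i(A_j \ {g}). -/

import Mathlib

open Finset

/-- An EF1 allocation of the goods in `S`. -/
def EF1Valid {n : ℕ} {G : Type*} [DecidableEq G] (v : Fin n → Finset G → ℝ)
    (S : Finset G) (A : Fin n → Finset G) : Prop :=
  (∀ i j, i ≠ j → Disjoint (A i) (A j)) ∧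
  Finset.univ.biUnion A = S ∧
  ∀ i j : Fin n, (A j).Nonempty → ∃ g ∈ A j, v i ((A j).erase g) ≤ v i (A i)

lemma ef1_exists_aux {n : ℕ} (hn : 0 < n) {G : Type*} [DecidableEq G] (M : Finset G)
    (v : Fin n → Finset G → ℝ)
    (hmono : ∀ i, ∀ S T : Finset G, S ⊆ T → T ⊆ M → v i S ≤ v i T) :
    ∀ S : Finset G, S ⊆ M → ∃ A, EF1Valid v S A := by
  intro S
  induction S using Finset.induction_on with
  | empty =>
    intro _
    refine ⟨fun _ => ∅, ?_, ?_, ?_⟩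
    · intro i j _; exact disjoint_bot_left
    · ext a; simp
    · intro i j hj; exact (Finset.not_nonempty_empty hj).elim
  | @insert g S hg ih =>
    intro hins
    have hS : S ⊆ M := fun a ha => hins (Finset.mem_insert_of_mem ha)
    have hgM : g ∈ M := hins (Finset.mem_insert_self g S)
    obtain ⟨A₀, hA₀⟩ := ih hS
    -- The set of valid allocations of S is finite and nonempty; take a maximizer of the sum.
    have hfin : {A : Fin n → Finset G | EF1Valid v S A}.Finite := by
      apply Set.Finite.subset (Finset.finite_toSet (Fintype.piFinset fun _ : Fin n => S.powerset))
      intro A hA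
      simp only [Finset.coe_sort_coe, Finset.mem_coe, Fintype.mem_piFinset, Finset.mem_powerset]
      intro i
      rw [← hA.2.1]
      exact Finset.subset_biUnion_of_mem A (Finset.mem_univ i)
    obtain ⟨A, hA, hmax⟩ := Set.Finite.exists_maximalFor (fun A => ∑ i, v i (A i)) _ hfin ⟨A₀, hA₀⟩
    have hAS : ∀ k, A k ⊆ S := by
      intro k
      rw [← hA.2.1]
      exact Finset.subset_biUnion_of_mem A (Finset.mem_univ k)
    have hAM : ∀ k, A k ⊆ M := fun k => (hAS k).trans hS
    -- There exists an unenvied agent.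
    have hunenvied : ∃ j, ∀ i, v i (A j) ≤ v i (A i) := by
      by_contra hno
      push_neg at hno
      choose f hf using hno
      -- find a periodic point of f
      obtain ⟨a, -, b, -, hab, heq⟩ :
          ∃ a ∈ Finset.range (n + 1), ∃ b ∈ Finset.range (n + 1), a ≠ b ∧
            f^[a] ⟨0, hn⟩ = f^[b] ⟨0, hn⟩ := by
        apply Finset.exists_ne_map_eq_of_card_lt_of_maps_to (t := (Finset.univ : Finset (Fin n)))
        · simp [Fintype.card_fin]
        · intro a _; exact Finset.mem_univ _
      wlog hab' : a < b generalizing a b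
      · exact this b a hab.symm heq.symm (by omega)
      set x : Fin n := f^[a] ⟨0, hn⟩ with hx
      set p : ℕ := b - a with hp
      have hp0 : 0 < p := by omega
      have hper : f^[p] x = x := by
        rw [hx, ← Function.iterate_add_apply]
        rw [show p + a = b by omega]
        exact heq.symm
      have hmul : ∀ m, f^[p * m] x = x := by
        intro m
        rw [Function.iterate_mul]
        exact Function.iterate_fixed hper m
      have hmod : ∀ k, f^[k] x = f^[k % p] x := by
        intro k
        conv_lhs => rw [← Nat.mod_add_div k p]
        rw [Function.iterate_add_apply, hmul]
      set C : Finset (Fin n) := (Finset.range p).image (fun k => f^[k] x) with hC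
      have hCiter : ∀ k, f^[k] x ∈ C := by
        intro k
        rw [hmod k]
        exact Finset.mem_image_of_mem _ (Finset.mem_range.mpr (Nat.mod_lt _ hp0))
      have hCfix : ∀ i ∈ C, f^[p] i = i := by
        intro i hi
        obtain ⟨k, -, hk⟩ := Finset.mem_image.mp hi
        rw [← hk, ← Function.iterate_add_apply, Nat.add_comm, Function.iterate_add_apply, hper]
      set σ : Fin n → Fin n := fun i => if i ∈ C then f^[p - 1] i else i with hσ
      have hσC : ∀ i ∈ C, σ i ∈ C := by
        intro i hi
        obtain ⟨k, -, hk⟩ := Finset.mem_image.mp hi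
        simp only [hσ, if_pos hi]
        rw [← hk, ← Function.iterate_add_apply]
        exact hCiter _
      have hfσ : ∀ i ∈ C, f (σ i) = i := by
        intro i hi
        simp only [hσ, if_pos hi]
        rw [← Function.iterate_succ_apply' f (p - 1) i, Nat.succ_eq_add_one, show p - 1 + 1 = p by omega]
        exact hCfix i hi
      have hlt : ∀ i ∈ C, v i (A i) < v i (A (σ i)) := by
        intro i hi
        have := hf (σ i)
        rwa [hfσ i hi] at this
      have hle : ∀ i, v i (A i) ≤ v i (A (σ i)) := by
        intro i
        by_cases hi : i ∈ C
        · exact (hlt i hi).le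
        · simp only [hσ, if_neg hi]; exact le_refl _
      have hinj : Function.Injective σ := by
        intro i j h
        by_cases hi : i ∈ C <;> by_cases hj : j ∈ C
        · rw [← hfσ i hi, ← hfσ j hj, h]
        · exfalso
          have h1 : σ i ∈ C := hσC i hi
          rw [h] at h1
          simp only [hσ, if_neg hj] at h1
          exact hj h1
        · exfalso
          have h1 : σ j ∈ C := hσC j hj
          rw [← h] at h1
          simp only [hσ, if_neg hi] at h1
          exact hi h1
        · simpa only [hσ, if_neg hi, if_neg hj] using h
      have hsurj : Function.Surjective σ := Finite.injective_iff_surjective.mp hinj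
      -- the permuted allocation
      set B : Fin n → Finset G := fun i => A (σ i) with hB
      have hBvalid : EF1Valid v S B := by
        refine ⟨?_, ?_, ?_⟩
        · intro i j hij
          exact hA.1 _ _ (fun h => hij (hinj h))
        · ext a
          simp only [Finset.mem_biUnion, Finset.mem_univ, true_and, hB]
          rw [← hA.2.1]
          simp only [Finset.mem_biUnion, Finset.mem_univ, true_and]
          constructor
          · rintro ⟨i, hi⟩; exact ⟨σ i, hi⟩
          · rintro ⟨j, hj⟩
            obtain ⟨i, rfl⟩ := hsurj j
            exact ⟨i, hj⟩
        · intro i j hj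
          obtain ⟨g', hg', hval⟩ := hA.2.2 i (σ j) hj
          exact ⟨g', hg', hval.trans (hle i)⟩
      have hsum : ∑ i, v i (A i) < ∑ i, v i (B i) := by
        apply Finset.sum_lt_sum
        · intro i _; exact hle i
        · exact ⟨x, Finset.mem_univ x, hlt x (by simpa using hCiter 0)⟩
      have := hmax hBvalid hsum.le
      exact absurd this (not_le.mpr hsum)
    obtain ⟨j, hj⟩ := hunenvied
    -- give g to the unenvied agent j
    have hgA : ∀ k, g ∉ A k := fun k h => hg (hAS k h)
    set A' : Fin n → Finset G := Function.update A j (insert g (A j)) with hA'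
    have hA'j : A' j = insert g (A j) := Function.update_self j _ A
    have hA'ne : ∀ k, k ≠ j → A' k = A k := fun k hk => Function.update_of_ne hk _ A
    have hA'M : ∀ k, A' k ⊆ M := by
      intro k
      by_cases hk : k = j
      · rw [hk, hA'j]; exact Finset.insert_subset hgM (hAM j)
      · rw [hA'ne k hk]; exact hAM k
    have hvle : ∀ i, v i (A i) ≤ v i (A' i) := by
      intro i
      by_cases hi : i = j
      · subst hi
        rw [hA'j]
        exact hmono i _ _ (Finset.subset_insert g (A i)) (hA'j ▸ hA'M i)
      · rw [hA'ne i hi]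
    refine ⟨A', ?_, ?_, ?_⟩
    · intro i k hik
      by_cases hi : i = j <;> by_cases hk : k = j
      · exact absurd (hi.trans hk.symm) hik
      · subst hi
        rw [hA'j, hA'ne k hk, Finset.disjoint_insert_left]
        exact ⟨hgA k, hA.1 i k hik⟩
      · subst hk
        rw [hA'j, hA'ne i hi, Finset.disjoint_insert_right]
        exact ⟨hgA i, hA.1 i k hik⟩
      · rw [hA'ne i hi, hA'ne k hk]
        exact hA.1 i k hik
    · ext a
      simp only [Finset.mem_biUnion, Finset.mem_univ, true_and, Finset.mem_insert]
      constructor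
      · rintro ⟨i, hi⟩
        by_cases h : i = j
        · subst h
          rw [hA'j, Finset.mem_insert] at hi
          rcases hi with h | h
          · exact Or.inl h
          · exact Or.inr (hAS i h)
        · rw [hA'ne i h] at hi
          exact Or.inr (hAS i hi)
      · rintro (rfl | ha)
        · exact ⟨j, by rw [hA'j]; exact Finset.mem_insert_self _ _⟩
        · rw [← hA.2.1] at ha
          obtain ⟨i, -, hi⟩ := Finset.mem_biUnion.mp ha
          by_cases h : i = j
          · subst h
            exact ⟨i, by rw [hA'j]; exact Finset.mem_insert_of_mem hi⟩
          · exact ⟨i, by rw [hA'ne i h]; exact hi⟩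
    · intro i k hk
      by_cases h : k = j
      · subst h
        refine ⟨g, by rw [hA'j]; exact Finset.mem_insert_self _ _, ?_⟩
        rw [hA'j, Finset.erase_insert (hgA k)]
        exact (hj i).trans (hvle i)
      · rw [hA'ne k h] at hk ⊢
        obtain ⟨g', hg', hval⟩ := hA.2.2 i k hk
        exact ⟨g', hg', hval.trans (hvle i)⟩

/-- For every discrete fair division instance with `n` agents, a finite set `M`
of goods, and monotone normalized valuation functions, there exists an EF1 allocation. -/
theorem ef1_exists {n : ℕ} (hn : 0 < n) {G : Type*} [DecidableEq G] (M : Finset G)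
    (v : Fin n → Finset G → ℝ)
    (hnorm : ∀ i, v i ∅ = 0)
    (hmono : ∀ i, ∀ S T : Finset G, S ⊆ T → T ⊆ M → v i S ≤ v i T) :
    ∃ A : Fin n → Finset G,
      (∀ i j, i ≠ j → Disjoint (A i) (A j)) ∧
      Finset.univ.biUnion A = M ∧
      ∀ i j : Fin n, (A j).Nonempty → ∃ g ∈ A j, v i ((A j).erase g) ≤ v i (A i) := by
  obtain ⟨A, h1, h2, h3⟩ := ef1_exists_aux hn M v hmono M Finset.Subset.rfl
  exact ⟨A, h1, h2, h3⟩
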